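/- Lemma (internal triangle): if a B-facet \tau \subset Z^4_{\ge 0} contains an internal V-triangle, then \tau is a B_1-facet, a (possibly degenerate) B_2-facet, or the standard cross-polytope {(1,1,0,0),(1,0,1,0),(1,0,0,1),(0,1,1,0),(0,1,0,1),(0,0,1,1)} (up to permutation of coordinates). -/

import Mathlib

/-- Cast an integer lattice point to a rational point. -/
def toQ {n : ℕ} (v : Fin n → ℤ) : Fin n → ℚ := fun i => (v i : ℚ)

/-- A (3-dimensional) B-simplex in `ℤ⁴_{≥0}`: a tetrahedron which is a pyramid of lattice
height 1 whose base triangle lies in a coordinate hyperplane `{x_i = 0}`: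
some coordinate `i` equals `1` at one vertex (the apex) and `0` at the other three. -/
def IsBSimplex4 (v : Fin 4 → (Fin 4 → ℤ)) : Prop :=
  ∃ i : Fin 4, ∃ a : Fin 4, v a i = 1 ∧ ∀ b : Fin 4, b ≠ a → v b i = 0

/-- A B-facet in `ℤ⁴_{≥0}`: a finite 3-dimensional set of lattice points with nonnegative
coordinates, lying on an affine hyperplane `∑ aᵢxᵢ = b` with all `aᵢ > 0` (positive normal
covector), such that every 3-dimensional simplex (affinely independent quadruple) with
vertices in it is a B-simplex. -/
def IsBFacet (S : Finset (Fin 4 → ℤ)) : Prop :=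
  (∀ p ∈ S, ∀ i, 0 ≤ p i) ∧
  (∃ a : Fin 4 → ℤ, (∀ i, 0 < a i) ∧ ∃ b : ℤ, ∀ p ∈ S, (∑ i, a i * p i) = b) ∧
  (∃ v : Fin 4 → (Fin 4 → ℤ), (∀ j, v j ∈ S) ∧ AffineIndependent ℚ (fun j => toQ (v j))) ∧
  (∀ v : Fin 4 → (Fin 4 → ℤ), (∀ j, v j ∈ S) →
    AffineIndependent ℚ (fun j => toQ (v j)) → IsBSimplex4 v)

/-- A B₁-facet: a pyramid of height 1 with base on a coordinate hyperplane. -/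
def IsB1Facet (S : Finset (Fin 4 → ℤ)) : Prop :=
  ∃ i : Fin 4, ∃ q ∈ S, q i = 1 ∧ ∀ p ∈ S, p ≠ q → p i = 0

/-- A B₂-facet: its projection on some coordinate 2-plane is the triangle
`(0,0), (1,0), (0,1)`. -/
def IsB2Facet (S : Finset (Fin 4 → ℤ)) : Prop :=
  ∃ i j : Fin 4, i ≠ j ∧
    (∀ p ∈ S, (p i = 0 ∧ p j = 0) ∨ (p i = 1 ∧ p j = 0) ∨ (p i = 0 ∧ p j = 1)) ∧
    (∃ p ∈ S, p i = 0 ∧ p j = 0) ∧ (∃ p ∈ S, p i = 1 ∧ p j = 0) ∧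
    (∃ p ∈ S, p i = 0 ∧ p j = 1)

/-- A possibly degenerate B₂-facet: its projection on some coordinate 2-plane is contained
in the triangle `(0,0), (1,0), (0,1)`. -/
def IsDegB2Facet (S : Finset (Fin 4 → ℤ)) : Prop :=
  ∃ i j : Fin 4, i ≠ j ∧
    ∀ p ∈ S, (p i = 0 ∧ p j = 0) ∨ (p i = 1 ∧ p j = 0) ∨ (p i = 0 ∧ p j = 1)

/-- A flat border: after permuting coordinates, it contains a triangle `A B C` with
`A, B` of the form `(0,0,⋆,⋆)` and `C` of the form `(1,1,⋆,⋆)`, and all the other points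
are contained in `{x₁ = 0} ∪ {x₂ = 0}`. -/
def IsFlatBorder (S : Finset (Fin 4 → ℤ)) : Prop :=
  ∃ i j : Fin 4, i ≠ j ∧ ∃ A ∈ S, ∃ B ∈ S, ∃ C ∈ S,
    AffineIndependent ℚ (fun k => toQ (![A, B, C] k)) ∧
    A i = 0 ∧ A j = 0 ∧ B i = 0 ∧ B j = 0 ∧ C i = 1 ∧ C j = 1 ∧
    ∀ p ∈ S, p = C ∨ p i = 0 ∨ p j = 0

/-- The standard cross-polytope. -/
def crossPolytope : Finset (Fin 4 → ℤ) :=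
  {![1,1,0,0], ![1,0,1,0], ![1,0,0,1], ![0,1,1,0], ![0,1,0,1], ![0,0,1,1]}

/-- `τ` contains an internal V-triangle in the coordinate hyperplane `{x_i = 0}`: an
affinely independent triple of points of `τ` with `x_i = 0` such that no two of them share
a zero coordinate other than `i`, and no single one has two zero coordinates other
than `i`. -/
def HasInternalVTriangle (S : Finset (Fin 4 → ℤ)) : Prop :=
  ∃ i : Fin 4, ∃ A : Fin 3 → (Fin 4 → ℤ), (∀ k, A k ∈ S) ∧
    AffineIndependent ℚ (fun k => toQ (A k)) ∧
    (∀ k, A k i = 0) ∧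
    (∀ k l : Fin 3, k ≠ l → ∀ m : Fin 4, m ≠ i → ¬(A k m = 0 ∧ A l m = 0)) ∧
    (∀ k : Fin 3, ¬ ∃ m m' : Fin 4, m ≠ m' ∧ m ≠ i ∧ m' ≠ i ∧ A k m = 0 ∧ A k m' = 0)

/- ---------- generic helpers ---------- -/

lemma cover4 : ∀ i a b c x : Fin 4, a ≠ i → b ≠ i → c ≠ i → b ≠ a → c ≠ a → c ≠ b →
    (x = i ∨ x = a ∨ x = b ∨ x = c) := by decide

lemma exists4th : ∀ i a b : Fin 4, a ≠ i → b ≠ i → b ≠ a →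
    ∃ c, c ≠ i ∧ c ≠ a ∧ c ≠ b := by decide

lemma two_of_fin3 : ∀ l k1 k2 k : Fin 3, k1 ≠ k2 → k1 ≠ l → k2 ≠ l → k ≠ l →
    (k = k1 ∨ k = k2) := by decide

lemma cover3 : ∀ a b c x : Fin 3, b ≠ a → c ≠ a → c ≠ b → (x = a ∨ x = b ∨ x = c) := by decide

lemma sum4 {M : Type*} [AddCommMonoid M] (f : Fin 4 → M) (i a b c : Fin 4)
    (hai : a ≠ i) (hbi : b ≠ i) (hci : c ≠ i) (hba : b ≠ a) (hca : c ≠ a) (hcb : c ≠ b) :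
    ∑ x, f x = f i + f a + f b + f c := by
  have huniv : (Finset.univ : Finset (Fin 4)) = {i, a, b, c} := by
    rw [eq_comm, Finset.eq_univ_iff_forall]
    intro x
    rcases cover4 i a b c x hai hbi hci hba hca hcb with h | h | h | h <;> simp [h]
  rw [huniv]
  rw [Finset.sum_insert (by simp [hai.symm, hbi.symm, hci.symm]),
      Finset.sum_insert (by simp [hba.symm, hca.symm]),
      Finset.sum_insert (by simp [hcb.symm]), Finset.sum_singleton]
  abel

lemma eq_of_agree_except (a : Fin 4 → ℤ) (ha : ∀ x, 0 < a x) (C C' : Fin 4 → ℤ) (s : Fin 4)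
    (hagree : ∀ x, x ≠ s → C x = C' x)
    (hsum : ∑ x, a x * C x = ∑ x, a x * C' x) : C = C' := by
  have h1 : ∑ x, a x * (C x - C' x) = a s * (C s - C' s) :=
    Fintype.sum_eq_single s (fun x hx => by rw [hagree x hx]; ring)
  have h2 : ∑ x, a x * (C x - C' x) = 0 := by
    simp only [mul_sub]
    rw [Finset.sum_sub_distrib, hsum, sub_self]
  have h3 : C s = C' s := by
    have h4 := h1.symm.trans h2
    have has := (ha s).ne'
    rcases mul_eq_zero.mp h4 with h | h
    · exact absurd h has
    · linarith
  funext x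
  by_cases hx : x = s
  · rw [hx]; exact h3
  · exact hagree x hx

lemma eq_of_le_hyp (a : Fin 4 → ℤ) (ha : ∀ x, 0 < a x) (C C' : Fin 4 → ℤ)
    (hle : ∀ x, C x ≤ C' x)
    (hsum : ∑ x, a x * C x = ∑ x, a x * C' x) : C = C' := by
  have h2 : ∑ x, a x * (C' x - C x) = 0 := by
    simp only [mul_sub]
    rw [Finset.sum_sub_distrib, hsum, sub_self]
  have h3 := (Finset.sum_eq_zero_iff_of_nonneg (fun x _ => by
    have h4 := ha x; have h5 := hle x; nlinarith)).mp h2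
  funext x
  have h6 := h3 x (Finset.mem_univ x)
  have has := (ha x).ne'
  rcases mul_eq_zero.mp h6 with h | h
  · exact absurd h has
  · linarith

/- ---------- affine independence machinery ---------- -/

lemma myAffInd {ι : Type*} [Fintype ι] (p : ι → (Fin 4 → ℚ)) :
    AffineIndependent ℚ p ↔
      ∀ w : ι → ℚ, ∑ i, w i = 0 → ∑ i, w i • p i = 0 → ∀ i, w i = 0 := by
  rw [affineIndependent_iff_of_fintype]
  refine forall_congr' fun w => ?_
  constructor
  · intro h hw hc
    exact h hw (by rw [Finset.univ.weightedVSub_eq_linear_combination hw]; exact hc)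
  · intro h hw hc
    exact h hw (by rw [← Finset.univ.weightedVSub_eq_linear_combination hw]; exact hc)

def WC (p0 p1 p2 p3 : Fin 4 → ℤ) : Prop :=
  ∀ w : Fin 4 → ℚ, w 0 + w 1 + w 2 + w 3 = 0 →
    (∀ x : Fin 4, w 0 * p0 x + w 1 * p1 x + w 2 * p2 x + w 3 * p3 x = 0) →
    w 0 = 0 ∧ w 1 = 0 ∧ w 2 = 0 ∧ w 3 = 0

lemma affineIndependent_of_WC {p0 p1 p2 p3 : Fin 4 → ℤ} (H : WC p0 p1 p2 p3) :
    AffineIndependent ℚ (fun j => toQ (![p0, p1, p2, p3] j)) := by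
  rw [myAffInd]
  intro w hsum hcomb j
  rw [Fin.sum_univ_four] at hsum
  have hc : ∀ x : Fin 4, w 0 * p0 x + w 1 * p1 x + w 2 * p2 x + w 3 * p3 x = 0 := by
    intro x
    have := congrFun hcomb x
    simpa [Fin.sum_univ_four, toQ, Matrix.cons_val_zero, Matrix.cons_val_one,
      mul_comm] using this
  have := H w hsum hc
  fin_cases j <;> tauto

lemma tri_weights {A : Fin 3 → (Fin 4 → ℤ)} (h : AffineIndependent ℚ (fun k => toQ (A k)))
    (w0 w1 w2 : ℚ) (hsum : w0 + w1 + w2 = 0)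
    (hc : ∀ x : Fin 4, w0 * A 0 x + w1 * A 1 x + w2 * A 2 x = 0) :
    w0 = 0 ∧ w1 = 0 ∧ w2 = 0 := by
  rw [myAffInd] at h
  have h2 : ∑ k, (![w0, w1, w2]) k • toQ (A k) = 0 := by
    funext x
    simp only [Fin.sum_univ_three, Matrix.cons_val_zero, Matrix.cons_val_one, Matrix.head_cons,
      Matrix.cons_val_two, Matrix.tail_cons, Pi.add_apply, Pi.smul_apply, smul_eq_mul, toQ,
      Pi.zero_apply]
    linarith [hc x]
  have h3 := h ![w0, w1, w2] (by simp [Fin.sum_univ_three]; linarith) h2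
  exact ⟨h3 0, h3 1, h3 2⟩

lemma toQ_inj {v v' : Fin 4 → ℤ} (h : ∀ x, (v x : ℚ) = v' x) : v = v' := by
  funext x
  exact_mod_cast h x

lemma tri_distinct {A : Fin 3 → (Fin 4 → ℤ)} (h : AffineIndependent ℚ (fun k => toQ (A k)))
    {k l : Fin 3} (hkl : k ≠ l) : A k ≠ A l := by
  intro he
  exact hkl (h.injective (by simp [he]))

lemma quad {S : Finset (Fin 4 → ℤ)}
    (hB : ∀ v : Fin 4 → (Fin 4 → ℤ), (∀ j, v j ∈ S) →
      AffineIndependent ℚ (fun j => toQ (v j)) → IsBSimplex4 v)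
    {p0 p1 p2 p3 : Fin 4 → ℤ} (h0 : p0 ∈ S) (h1 : p1 ∈ S) (h2 : p2 ∈ S) (h3 : p3 ∈ S)
    (H : WC p0 p1 p2 p3) :
    ∃ m : Fin 4,
      (p0 m = 1 ∧ p1 m = 0 ∧ p2 m = 0 ∧ p3 m = 0) ∨
      (p1 m = 1 ∧ p0 m = 0 ∧ p2 m = 0 ∧ p3 m = 0) ∨
      (p2 m = 1 ∧ p0 m = 0 ∧ p1 m = 0 ∧ p3 m = 0) ∨
      (p3 m = 1 ∧ p0 m = 0 ∧ p1 m = 0 ∧ p2 m = 0) := by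
  have hmem : ∀ j, (![p0, p1, p2, p3]) j ∈ S := by
    intro j; fin_cases j <;> simpa
  obtain ⟨m, ap, hone, hzero⟩ := hB _ hmem (affineIndependent_of_WC H)
  refine ⟨m, ?_⟩
  fin_cases ap
  · refine Or.inl ⟨by simpa using hone, ?_, ?_, ?_⟩
    · simpa using hzero 1 (by decide)
    · simpa using hzero 2 (by decide)
    · simpa using hzero 3 (by decide)
  · refine Or.inr (Or.inl ⟨by simpa using hone, ?_, ?_, ?_⟩)
    · simpa using hzero 0 (by decide)
    · simpa using hzero 2 (by decide)
    · simpa using hzero 3 (by decide)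
  · refine Or.inr (Or.inr (Or.inl ⟨by simpa using hone, ?_, ?_, ?_⟩))
    · simpa using hzero 0 (by decide)
    · simpa using hzero 1 (by decide)
    · simpa using hzero 3 (by decide)
  · refine Or.inr (Or.inr (Or.inr ⟨by simpa using hone, ?_, ?_, ?_⟩))
    · simpa using hzero 0 (by decide)
    · simpa using hzero 1 (by decide)
    · simpa using hzero 2 (by decide)

/- ---------- step lemmas ---------- -/

section steps

variable {S : Finset (Fin 4 → ℤ)} {i : Fin 4} {A : Fin 3 → (Fin 4 → ℤ)}

lemma dichotomy
    (hB : ∀ v : Fin 4 → (Fin 4 → ℤ), (∀ j, v j ∈ S) →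
      AffineIndependent ℚ (fun j => toQ (v j)) → IsBSimplex4 v)
    (hAS : ∀ k, A k ∈ S)
    (hAind : AffineIndependent ℚ (fun k => toQ (A k)))
    (hAi : ∀ k, A k i = 0)
    (hApair : ∀ k l : Fin 3, k ≠ l → ∀ m : Fin 4, m ≠ i → ¬(A k m = 0 ∧ A l m = 0)) :
    ∀ p ∈ S, p i = 1 ∨ (p i = 0 ∧ ∃ α β γ : ℚ, α + β + γ = 1 ∧
      ∀ x, (p x : ℚ) = α * A 0 x + β * A 1 x + γ * A 2 x) := by
  intro p hp
  by_cases hw : WC (A 0) (A 1) (A 2) p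
  · left
    obtain ⟨m, hpat⟩ := quad hB (hAS 0) (hAS 1) (hAS 2) hp hw
    rcases hpat with ⟨h1, h2, h3, h4⟩ | ⟨h1, h2, h3, h4⟩ | ⟨h1, h2, h3, h4⟩ | ⟨h1, h2, h3, h4⟩
    · have hmi : m ≠ i := fun e => by rw [e, hAi 0] at h1; omega
      exact absurd ⟨h2, h3⟩ (hApair 1 2 (by decide) m hmi)
    · have hmi : m ≠ i := fun e => by rw [e, hAi 1] at h1; omega
      exact absurd ⟨h2, h3⟩ (hApair 0 2 (by decide) m hmi)
    · have hmi : m ≠ i := fun e => by rw [e, hAi 2] at h1; omega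
      exact absurd ⟨h2, h3⟩ (hApair 0 1 (by decide) m hmi)
    · by_cases hmi : m = i
      · rw [hmi] at h1; exact h1
      · exact absurd ⟨h2, h3⟩ (hApair 0 1 (by decide) m hmi)
  · right
    unfold WC at hw
    push_neg at hw
    obtain ⟨w, hsum, hcomb, hnz⟩ := hw
    have hw3 : w 3 ≠ 0 := by
      intro h3
      have hc : ∀ x : Fin 4, w 0 * A 0 x + w 1 * A 1 x + w 2 * A 2 x = 0 := by
        intro x
        have := hcomb x
        rw [h3] at this
        linarith
      obtain ⟨e0, e1, e2⟩ := tri_weights hAind (w 0) (w 1) (w 2) (by linarith) hc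
      exact hnz e0 e1 e2 h3
    refine ⟨?_, -(w 0) / w 3, -(w 1) / w 3, -(w 2) / w 3,
      by rw [← add_div, ← add_div, div_eq_one_iff_eq hw3]; linarith,
      fun x => by linear_combination (1 / w 3) * hcomb x - (p x : ℚ) * (mul_inv_cancel₀ hw3)⟩
    have h5 := hcomb i
    rw [hAi 0, hAi 1, hAi 2] at h5
    push_cast at h5
    have hpi : w 3 * (p i : ℚ) = 0 := by linarith
    rcases mul_eq_zero.mp hpi with h | h
    · exact absurd h hw3
    · exact_mod_cast h
  
lemma exists_top
    (hB : ∀ v : Fin 4 → (Fin 4 → ℤ), (∀ j, v j ∈ S) →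
      AffineIndependent ℚ (fun j => toQ (v j)) → IsBSimplex4 v)
    (hdim : ∃ v : Fin 4 → (Fin 4 → ℤ), (∀ j, v j ∈ S) ∧
      AffineIndependent ℚ (fun j => toQ (v j)))
    (hAS : ∀ k, A k ∈ S)
    (hAind : AffineIndependent ℚ (fun k => toQ (A k)))
    (hAi : ∀ k, A k i = 0)
    (hApair : ∀ k l : Fin 3, k ≠ l → ∀ m : Fin 4, m ≠ i → ¬(A k m = 0 ∧ A l m = 0)) :
    ∃ C ∈ S, C i = 1 := by
  obtain ⟨v, hvS, hvind⟩ := hdim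
  by_contra hno
  push_neg at hno
  have hplanar : ∀ j : Fin 4, ∃ α β γ : ℚ, α + β + γ = 1 ∧
      ∀ x, (v j x : ℚ) = α * A 0 x + β * A 1 x + γ * A 2 x := by
    intro j
    rcases dichotomy hB hAS hAind hAi hApair (v j) (hvS j) with h | ⟨_, h⟩
    · exact absurd h (hno (v j) (hvS j))
    · exact h
  choose α β γ hco hval using hplanar
  -- the 4 coefficient rows in ℚ³ are linearly dependent
  have hnli : ¬ LinearIndependent ℚ (fun j : Fin 4 => (![α j, β j, γ j] : Fin 3 → ℚ)) := by
    intro hli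
    have hcard := hli.fintype_card_le_finrank
    rw [Module.finrank_fintype_fun_eq_card] at hcard
    simp [Fintype.card_fin] at hcard
  rw [Fintype.not_linearIndependent_iff] at hnli
  obtain ⟨g, hg, j0, hj0⟩ := hnli
  have e0 : g 0 * α 0 + g 1 * α 1 + g 2 * α 2 + g 3 * α 3 = 0 := by
    have := congrFun hg (0 : Fin 3)
    simpa [Fin.sum_univ_four] using this
  have e1 : g 0 * β 0 + g 1 * β 1 + g 2 * β 2 + g 3 * β 3 = 0 := by
    have := congrFun hg (1 : Fin 3)
    simpa [Fin.sum_univ_four] using this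
  have e2 : g 0 * γ 0 + g 1 * γ 1 + g 2 * γ 2 + g 3 * γ 3 = 0 := by
    have := congrFun hg (2 : Fin 3)
    simpa [Fin.sum_univ_four] using this
  rw [myAffInd] at hvind
  have hzero := hvind g ?_ ?_
  · exact hj0 (hzero j0)
  · rw [Fin.sum_univ_four]
    have c0 := hco 0; have c1 := hco 1; have c2 := hco 2; have c3 := hco 3
    linear_combination e0 + e1 + e2 - g 0 * c0 - g 1 * c1 - g 2 * c2 - g 3 * c3
  · funext x
    simp only [Fin.sum_univ_four, Pi.add_apply, Pi.smul_apply, smul_eq_mul, toQ, Pi.zero_apply]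
    have p0 := hval 0 x; have p1 := hval 1 x; have p2 := hval 2 x; have p3 := hval 3 x
    rw [p0, p1, p2, p3]
    linear_combination ((A 0 x : ℚ)) * e0 + ((A 1 x : ℚ)) * e1 + ((A 2 x : ℚ)) * e2

end steps

/- ---------- pair lemmas ---------- -/

def GoodT (i : Fin 4) (A : Fin 3 → (Fin 4 → ℤ)) (C C' : Fin 4 → ℤ) (k l : Fin 3) : Prop :=
  ∃ m, m ≠ i ∧ A k m = 1 ∧ A l m = 0 ∧ C m = 0 ∧ C' m = 0

def DepT (A : Fin 3 → (Fin 4 → ℤ)) (C C' : Fin 4 → ℤ) (k l : Fin 3) : Prop :=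
  ∃ lam : ℚ, ∀ x, (C' x : ℚ) - C x = lam * ((A k x : ℚ) - A l x)

section pair

variable {S : Finset (Fin 4 → ℤ)} {i : Fin 4} {A : Fin 3 → (Fin 4 → ℤ)} {C C' : Fin 4 → ℤ}

lemma pairEdge
    (hB : ∀ v : Fin 4 → (Fin 4 → ℤ), (∀ j, v j ∈ S) →
      AffineIndependent ℚ (fun j => toQ (v j)) → IsBSimplex4 v)
    (hAS : ∀ k, A k ∈ S)
    (hAind : AffineIndependent ℚ (fun k => toQ (A k)))
    (hAi : ∀ k, A k i = 0)
    (hApair : ∀ k l : Fin 3, k ≠ l → ∀ m : Fin 4, m ≠ i → ¬(A k m = 0 ∧ A l m = 0))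
    (hC : C ∈ S) (hC' : C' ∈ S) (hCi : C i = 1) (hC'i : C' i = 1)
    (k l : Fin 3) (hkl : k ≠ l) :
    (GoodT i A C C' k l ∨ GoodT i A C C' l k) ∨ DepT A C C' k l := by
  by_cases hw : WC (A k) (A l) C C'
  · left
    obtain ⟨m, hpat⟩ := quad hB (hAS k) (hAS l) hC hC' hw
    rcases hpat with ⟨h1, h2, h3, h4⟩ | ⟨h1, h2, h3, h4⟩ | ⟨h1, h2, h3, h4⟩ | ⟨h1, h2, h3, h4⟩
    · have hmi : m ≠ i := fun e => by rw [e, hAi k] at h1; omega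
      exact Or.inl ⟨m, hmi, h1, h2, h3, h4⟩
    · have hmi : m ≠ i := fun e => by rw [e, hAi l] at h1; omega
      exact Or.inr ⟨m, hmi, h1, h2, h3, h4⟩
    · have hmi : m ≠ i := fun e => by rw [e, hC'i] at h4; omega
      exact absurd ⟨h2, h3⟩ (hApair k l hkl m hmi)
    · have hmi : m ≠ i := fun e => by rw [e, hCi] at h4; omega
      exact absurd ⟨h2, h3⟩ (hApair k l hkl m hmi)
  · right
    unfold WC at hw
    push_neg at hw
    obtain ⟨w, hsum, hcomb, hnz⟩ := hw
    have hei : w 2 + w 3 = 0 := by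
      have h5 := hcomb i
      rw [hAi k, hAi l, hCi, hC'i] at h5
      push_cast at h5
      linarith
    by_cases h2 : w 2 = 0
    · exfalso
      have h3 : w 3 = 0 := by linarith
      by_cases h0 : w 0 = 0
      · exact hnz h0 (by linarith) h2 h3
      · refine tri_distinct hAind hkl (funext fun x => ?_)
        have h6 := hcomb x
        rw [h2, h3] at h6
        have h7 : w 0 * ((A k x : ℚ) - A l x) = 0 := by
          have hw1 : w 1 = -w 0 := by linarith
          rw [hw1] at h6; linarith
        rcases mul_eq_zero.mp h7 with h | h
        · exact absurd h h0
        · exact_mod_cast sub_eq_zero.mp h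
    · refine ⟨w 0 / w 2, fun x => ?_⟩
      have h6 := hcomb x
      have hw1 : w 1 = -w 0 := by linarith
      have hw3 : w 3 = -w 2 := by linarith
      rw [hw1, hw3] at h6
      field_simp
      linarith
  
lemma dep_a
    (hAind : AffineIndependent ℚ (fun k => toQ (A k)))
    (h1 : DepT A C C' 1 2) (h2 : DepT A C C' 0 2) : C = C' := by
  obtain ⟨lam, hd⟩ := h1
  obtain ⟨lam', hd'⟩ := h2
  have h3 := tri_weights hAind (-lam') lam (lam' - lam) (by ring)
    (fun x => by have := hd x; have := hd' x; push_cast; linarith)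
  apply toQ_inj
  intro x
  have h4 := hd x
  rw [h3.2.1] at h4
  linarith

lemma dep_b
    (hAind : AffineIndependent ℚ (fun k => toQ (A k)))
    (h1 : DepT A C C' 1 2) (h2 : DepT A C C' 0 1) : C = C' := by
  obtain ⟨lam, hd⟩ := h1
  obtain ⟨lam', hd'⟩ := h2
  have h3 := tri_weights hAind (-lam') (lam + lam') (-lam) (by ring)
    (fun x => by have := hd x; have := hd' x; push_cast; linarith)
  apply toQ_inj
  intro x
  have h4 := hd x
  have h5 : lam = 0 := by have := h3.2.2; linarith
  rw [h5] at h4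
  linarith

lemma dep_c
    (hAind : AffineIndependent ℚ (fun k => toQ (A k)))
    (h1 : DepT A C C' 0 2) (h2 : DepT A C C' 0 1) : C = C' := by
  obtain ⟨lam, hd⟩ := h1
  obtain ⟨lam', hd'⟩ := h2
  have h3 := tri_weights hAind (lam - lam') lam' (-lam) (by ring)
    (fun x => by have := hd x; have := hd' x; push_cast; linarith)
  apply toQ_inj
  intro x
  have h4 := hd x
  have h5 : lam = 0 := by have := h3.2.2; linarith
  rw [h5] at h4
  linarith

/-- For a pair of distinct top points, at least two of the three triangle edges give
good quadruples. -/
lemma pair_main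
    (hB : ∀ v : Fin 4 → (Fin 4 → ℤ), (∀ j, v j ∈ S) →
      AffineIndependent ℚ (fun j => toQ (v j)) → IsBSimplex4 v)
    (hAS : ∀ k, A k ∈ S)
    (hAind : AffineIndependent ℚ (fun k => toQ (A k)))
    (hAi : ∀ k, A k i = 0)
    (hApair : ∀ k l : Fin 3, k ≠ l → ∀ m : Fin 4, m ≠ i → ¬(A k m = 0 ∧ A l m = 0))
    (hC : C ∈ S) (hC' : C' ∈ S) (hCi : C i = 1) (hC'i : C' i = 1) (hne : C ≠ C') :
    ∃ k1 l1 k2 l2 : Fin 3, k1 ≠ l1 ∧ k2 ≠ l2 ∧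
      ({k1, l1} : Finset (Fin 3)) ≠ {k2, l2} ∧
      GoodT i A C C' k1 l1 ∧ GoodT i A C C' k2 l2 := by
  have e12 := pairEdge hB hAS hAind hAi hApair hC hC' hCi hC'i 1 2 (by decide)
  have e02 := pairEdge hB hAS hAind hAi hApair hC hC' hCi hC'i 0 2 (by decide)
  have e01 := pairEdge hB hAS hAind hAi hApair hC hC' hCi hC'i 0 1 (by decide)
  -- helper to pack
  have pack : ∀ k1 l1 k2 l2 : Fin 3, k1 ≠ l1 → k2 ≠ l2 →
      ({k1, l1} : Finset (Fin 3)) ≠ {k2, l2} →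
      (GoodT i A C C' k1 l1 ∨ GoodT i A C C' l1 k1) →
      (GoodT i A C C' k2 l2 ∨ GoodT i A C C' l2 k2) →
      ∃ k1 l1 k2 l2 : Fin 3, k1 ≠ l1 ∧ k2 ≠ l2 ∧
        ({k1, l1} : Finset (Fin 3)) ≠ {k2, l2} ∧
        GoodT i A C C' k1 l1 ∧ GoodT i A C C' k2 l2 := by
    intro k1 l1 k2 l2 h1 h2 h12 g1 g2
    have swap1 : ({l1, k1} : Finset (Fin 3)) = {k1, l1} := by
      ext z; simp [or_comm]
    have swap2 : ({l2, k2} : Finset (Fin 3)) = {k2, l2} := by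
      ext z; simp [or_comm]
    rcases g1 with g1 | g1 <;> rcases g2 with g2 | g2
    · exact ⟨k1, l1, k2, l2, h1, h2, h12, g1, g2⟩
    · exact ⟨k1, l1, l2, k2, h1, h2.symm, by rw [swap2]; exact h12, g1, g2⟩
    · exact ⟨l1, k1, k2, l2, h1.symm, h2, by rw [swap1]; exact h12, g1, g2⟩
    · exact ⟨l1, k1, l2, k2, h1.symm, h2.symm, by rw [swap1, swap2]; exact h12, g1, g2⟩
  rcases e12 with g12 | d12
  · rcases e02 with g02 | d02
    · exact pack 1 2 0 2 (by decide) (by decide) (by decide) g12 g02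
    · rcases e01 with g01 | d01
      · exact pack 1 2 0 1 (by decide) (by decide) (by decide) g12 g01
      · exact absurd (dep_c hAind d02 d01) hne
  · rcases e02 with g02 | d02
    · rcases e01 with g01 | d01
      · exact pack 0 2 0 1 (by decide) (by decide) (by decide) g02 g01
      · exact absurd (dep_b hAind d12 d01) hne
    · exact absurd (dep_a hAind d12 d02) hne

end pair

/- ---------- common-zero case: degenerate B₂ ---------- -/

section cz

variable {S : Finset (Fin 4 → ℤ)} {i : Fin 4} {A : Fin 3 → (Fin 4 → ℤ)} {C C' : Fin 4 → ℤ}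

lemma cz_case
    (hpos : ∀ p ∈ S, ∀ x, 0 ≤ p x)
    (aa : Fin 4 → ℤ) (ha : ∀ x, 0 < aa x) (bb : ℤ)
    (hab : ∀ p ∈ S, (∑ x, aa x * p x) = bb)
    (hB : ∀ v : Fin 4 → (Fin 4 → ℤ), (∀ j, v j ∈ S) →
      AffineIndependent ℚ (fun j => toQ (v j)) → IsBSimplex4 v)
    (hAS : ∀ k, A k ∈ S)
    (hAi : ∀ k, A k i = 0)
    (hAsingle : ∀ k : Fin 3, ¬ ∃ m m' : Fin 4, m ≠ m' ∧ m ≠ i ∧ m' ≠ i ∧ A k m = 0 ∧ A k m' = 0)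
    (hdich01 : ∀ p ∈ S, p i = 0 ∨ p i = 1)
    (m : Fin 4) (hmi : m ≠ i) (l : Fin 3) (hAlm : A l m = 0)
    (hC : C ∈ S) (hC' : C' ∈ S) (hCi : C i = 1) (hC'i : C' i = 1) (hne : C ≠ C')
    (hCm : C m = 0) (hC'm : C' m = 0)
    (hU : ∀ p ∈ S, p i = 1 → p m = 0) :
    IsDegB2Facet S := by
  refine ⟨i, m, Ne.symm hmi, fun p hp => ?_⟩
  rcases hdich01 p hp with hpi | hpi
  · -- bottom point: show p m ∈ {0,1}
    have hpm : p m = 0 ∨ p m = 1 := by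
      by_contra hcon
      push_neg at hcon
      have hpm2 : 2 ≤ p m := by
        have := hpos p hp m
        omega
      -- quadruple (p, A l, C, C') is affinely independent
      have hQCi : (C i : ℚ) = 1 := by exact_mod_cast hCi
      have hwc : WC p (A l) C C' := by
        intro w hsum hcomb
        have hxi := hcomb i
        rw [hpi, hAi l, hCi, hC'i] at hxi
        push_cast at hxi
        have hxm := hcomb m
        rw [hAlm, hCm, hC'm] at hxm
        push_cast at hxm
        have hw0 : w 0 = 0 := by
          rcases mul_eq_zero.mp (show w 0 * (p m : ℚ) = 0 by linarith) with h | h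
          · exact h
          · exfalso
            have : (p m : ℚ) ≥ 2 := by exact_mod_cast hpm2
            linarith
        have hw1 : w 1 = -(w 2 + w 3) - w 0 + (w 0 + w 1 + w 2 + w 3) := by ring
        have hw1' : w 1 = 0 := by rw [hsum] at hw1; linarith
        have hw2 : w 2 = 0 := by
          by_contra hw2
          apply hne
          apply toQ_inj
          intro x
          have h6 := hcomb x
          rw [hw0, hw1'] at h6
          have hw3 : w 3 = -w 2 := by linarith
          rw [hw3] at h6
          have h7 : w 2 * ((C x : ℚ) - C' x) = 0 := by linarith
          rcases mul_eq_zero.mp h7 with h | h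
          · exact absurd h hw2
          · linarith
        exact ⟨hw0, hw1', hw2, by linarith⟩
      obtain ⟨m', hpat⟩ := quad hB hp (hAS l) hC hC' hwc
      have hAl_zeros : ∀ m'', m'' ≠ i → A l m'' = 0 → m'' = m := by
        intro m'' hm''i hz
        by_contra hne''
        exact hAsingle l ⟨m'', m, hne'', hm''i, hmi, hz, hAlm⟩
      rcases hpat with ⟨h1, h2, h3, h4⟩ | ⟨h1, h2, h3, h4⟩ | ⟨h1, h2, h3, h4⟩ | ⟨h1, h2, h3, h4⟩
      · -- apex p : p m' = 1, A l m' = 0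
        by_cases hm'i : m' = i
        · rw [hm'i, hpi] at h1; omega
        · have := hAl_zeros m' hm'i h2
          rw [this] at h1; omega
      · -- apex A l : A l m' = 1, p m' = 0, C m' = 0, C' m' = 0
        have hm'i : m' ≠ i := fun e => by rw [e, hAi l] at h1; omega
        have hm'm : m' ≠ m := fun e => by rw [e, hAlm] at h1; omega
        -- C and C' agree except at the fourth coordinate
        apply hne
        refine eq_of_agree_except aa ha C C' ?_ ?_ ?_
        · exact Classical.choose (exists4th i m m' hmi hm'i hm'm)
        · intro x hx
          obtain ⟨hsi, hsm, hsm'⟩ := Classical.choose_spec (exists4th i m m' hmi hm'i hm'm)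
          rcases cover4 i m m' (Classical.choose (exists4th i m m' hmi hm'i hm'm)) x
            hmi hm'i hsi hm'm hsm hsm' with h | h | h | h
          · rw [h, hCi, hC'i]
          · rw [h, hCm, hC'm]
          · rw [h, h3, h4]
          · exact absurd h hx
        · rw [hab C hC, hab C' hC']
      · -- apex C : C m' = 1, p m' = 0, A l m' = 0, C' m' = 0
        by_cases hm'i : m' = i
        · rw [hm'i, hC'i] at h4; omega
        · have := hAl_zeros m' hm'i h3
          rw [this, hCm] at h1; omega
      · -- apex C' : C' m' = 1, p m' = 0, A l m' = 0, C m' = 0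
        by_cases hm'i : m' = i
        · rw [hm'i, hCi] at h4; omega
        · have := hAl_zeros m' hm'i h3
          rw [this, hC'm] at h1; omega
    rcases hpm with h | h
    · exact Or.inl ⟨hpi, h⟩
    · exact Or.inr (Or.inr ⟨hpi, h⟩)
  · exact Or.inr (Or.inl ⟨hpi, hU p hp hpi⟩)

end cz

/- ---------- cross polytope helpers ---------- -/

def ee (u v : Fin 4) : Fin 4 → ℤ := fun x => (if x = u then 1 else 0) + (if x = v then 1 else 0)

lemma ee_mem_cross : ∀ u v : Fin 4, u ≠ v → ee u v ∈ crossPolytope := by decide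

lemma cross_eq_ee : ∀ q ∈ crossPolytope, ∃ u v, u ≠ v ∧ q = ee u v := by decide

lemma ee_apply_left {u v : Fin 4} (h : u ≠ v) : ee u v u = 1 := by
  simp [ee, h.symm, h]
lemma ee_apply_right {u v : Fin 4} (h : u ≠ v) : ee u v v = 1 := by
  simp [ee, h.symm, h]
lemma ee_apply_other {u v x : Fin 4} (hxu : x ≠ u) (hxv : x ≠ v) : ee u v x = 0 := by
  simp [ee, hxu, hxv]

section no2

variable {S : Finset (Fin 4 → ℤ)}

/-- the key contradiction quadruple ruling out a bottom point with a coordinate 2 in the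
cross-polytope situation -/
lemma no2case
    (hB : ∀ v : Fin 4 → (Fin 4 → ℤ), (∀ j, v j ∈ S) →
      AffineIndependent ℚ (fun j => toQ (v j)) → IsBSimplex4 v)
    (i sa sb sc : Fin 4)
    (hai : sa ≠ i) (hbi : sb ≠ i) (hci : sc ≠ i) (hba : sb ≠ sa) (hca : sc ≠ sa)
    (hcb : sc ≠ sb)
    (p q r t : Fin 4 → ℤ) (hp : p ∈ S) (hq : q ∈ S) (hr : r ∈ S) (ht : t ∈ S)
    (hp1 : p i = 0) (hp2 : p sa = 2) (hp3 : p sb = 0) (hp4 : p sc = 0)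
    (hq1 : q i = 0) (hq2 : q sa = 0) (hq3 : q sb = 1) (hq4 : q sc = 1)
    (hr1 : r i = 1) (hr2 : r sa = 0) (hr3 : r sb = 1) (hr4 : r sc = 0)
    (ht1 : t i = 1) (ht2 : t sa = 0) (ht3 : t sb = 0) (ht4 : t sc = 1) : False := by
  have hwc : WC p q r t := by
    intro w hsum hcomb
    have ea := hcomb sa
    rw [hp2, hq2, hr2, ht2] at ea
    push_cast at ea
    have ei := hcomb i
    rw [hp1, hq1, hr1, ht1] at ei
    push_cast at ei
    have eb := hcomb sb
    rw [hp3, hq3, hr3, ht3] at eb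
    push_cast at eb
    have ec := hcomb sc
    rw [hp4, hq4, hr4, ht4] at ec
    push_cast at ec
    refine ⟨by linarith, by linarith, by linarith, by linarith⟩
  obtain ⟨m, hpat⟩ := quad hB hp hq hr ht hwc
  rcases cover4 i sa sb sc m hai hbi hci hba hca hcb with h | h | h | h <;> subst h <;>
    rcases hpat with ⟨h1, h2, h3, h4⟩ | ⟨h1, h2, h3, h4⟩ | ⟨h1, h2, h3, h4⟩ | ⟨h1, h2, h3, h4⟩ <;>
    omega

end no2

/- ---------- main theorem ---------- -/


/-- internal triangle lemma: if a B-facet `τ ⊂ ℤ⁴_{≥0}` contains an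
internal V-triangle, then `τ` is a B₁-facet, a (possibly degenerate) B₂-facet, or the
standard cross-polytope. -/
theorem stmt14 (S : Finset (Fin 4 → ℤ)) (hS : IsBFacet S)
    (h : HasInternalVTriangle S) :
    IsB1Facet S ∨ IsDegB2Facet S ∨ S = crossPolytope := by
  obtain ⟨hpos, ⟨aa, ha, bb, hab⟩, hdim, hB⟩ := hS
  obtain ⟨i, A, hAS, hAind, hAi, hApair, hAsingle⟩ := h
  have hdicho := dichotomy hB hAS hAind hAi hApair
  have hdich01 : ∀ p ∈ S, p i = 0 ∨ p i = 1 := by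
    intro p hp
    rcases hdicho p hp with h1 | ⟨h1, _⟩
    · exact Or.inr h1
    · exact Or.inl h1
  obtain ⟨C0, hC0S, hC0i⟩ := exists_top hB hdim hAS hAind hAi hApair
  by_cases hU1 : ∃ C' ∈ S, C' i = 1 ∧ C' ≠ C0
  swap
  · -- only one top point : B₁ facet
    left
    push_neg at hU1
    refine ⟨i, C0, hC0S, hC0i, fun p hp hpne => ?_⟩
    rcases hdich01 p hp with h1 | h1
    · exact h1
    · exact absurd (hU1 p hp h1) hpne
  obtain ⟨C1, hC1S, hC1i, hC1ne⟩ := hU1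
  by_cases H3 : ∃ C2 ∈ S, C2 i = 1 ∧ C2 ≠ C0 ∧ C2 ≠ C1
  swap
  · -- exactly two top points : common zero, degenerate B₂
    right; left
    push_neg at H3
    obtain ⟨k1, l1, k2, l2, hk1l1, hk2l2, hedne, hG1, hG2⟩ :=
      pair_main hB hAS hAind hAi hApair hC0S hC1S hC0i hC1i (fun e => hC1ne e.symm)
    obtain ⟨m, hmi, hAk1, hAl1, hC0m, hC1m⟩ := hG1
    refine cz_case hpos aa ha bb hab hB hAS hAi hAsingle hdich01 m hmi l1 hAl1
      hC0S hC1S hC0i hC1i (fun e => hC1ne e.symm) hC0m hC1m ?_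
    intro p hp hpi
    rcases eq_or_ne p C0 with rfl | hp0
    · exact hC0m
    rcases eq_or_ne p C1 with rfl | hp1
    · exact hC1m
    · exact absurd (H3 p hp hpi hp0) hp1
  obtain ⟨C2, hC2S, hC2i, hC2ne0, hC2ne1⟩ := H3
  by_cases H2 : ∀ q ∈ S, q i = 1 → ∃ m m' : Fin 4, m ≠ m' ∧ m ≠ i ∧ m' ≠ i ∧ q m = 0 ∧ q m' = 0
  swap
  · -- some top point with at most one zero : common zero, degenerate B₂
    right; left
    push_neg at H2
    obtain ⟨Cs, hCsS, hCsi, hCs1⟩ := H2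
    -- Cs has at most one nonzero... rather: no two distinct non-i zeros
    have huniq : ∀ m m' : Fin 4, m ≠ i → m' ≠ i → Cs m = 0 → Cs m' = 0 → m = m' := by
      intro m m' hmi hm'i hz hz'
      by_contra hne
      exact (hCs1 m m' hne hmi hm'i hz) hz'
    -- another top point
    obtain ⟨Co, hCoS, hCoi, hCone⟩ : ∃ Co ∈ S, Co i = 1 ∧ Cs ≠ Co := by
      rcases eq_or_ne Cs C0 with rfl | hne
      · exact ⟨C1, hC1S, hC1i, fun e => hC1ne e.symm⟩
      · exact ⟨C0, hC0S, hC0i, hne⟩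
    obtain ⟨k1, l1, k2, l2, hk1l1, hk2l2, hedne, hG1, hG2⟩ :=
      pair_main hB hAS hAind hAi hApair hCsS hCoS hCsi hCoi hCone
    obtain ⟨m, hmi, hAk1, hAl1, hCsm, hCom⟩ := hG1
    refine cz_case hpos aa ha bb hab hB hAS hAi hAsingle hdich01 m hmi l1 hAl1
      hCsS hCoS hCsi hCoi hCone hCsm hCom ?_
    intro p hp hpi
    rcases eq_or_ne p Cs with rfl | hpne
    · exact hCsm
    obtain ⟨k1', l1', k2', l2', _, _, _, hG1', _⟩ :=
      pair_main hB hAS hAind hAi hApair hCsS hp hCsi hpi (Ne.symm hpne)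
    obtain ⟨m', hm'i, _, _, hCsm', hpm'⟩ := hG1'
    rwa [huniq m' m hm'i hmi hCsm' hCsm] at hpm'
  -- now : at least three top points, all top points have two zeros ⇒ cross polytope
  right; right
  -- s-data for top points
  have hsfun : ∀ q ∈ S, q i = 1 → ∃ s, s ≠ i ∧ 1 ≤ q s ∧ ∀ x, x ≠ i → x ≠ s → q x = 0 := by
    intro q hq hqi
    obtain ⟨m, m', hmm', hmi, hm'i, hz, hz'⟩ := H2 q hq hqi
    obtain ⟨s, hsi, hsm, hsm'⟩ := exists4th i m m' hmi hm'i (Ne.symm hmm')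
    have hval : ∀ x, x ≠ i → x ≠ s → q x = 0 := by
      intro x hxi hxs
      rcases cover4 i m m' s x hmi hm'i hsi (Ne.symm hmm') hsm hsm' with h | h | h | h
      · exact absurd h hxi
      · rw [h]; exact hz
      · rw [h]; exact hz'
      · exact absurd h hxs
    refine ⟨s, hsi, ?_, hval⟩
    by_contra hqs
    push_neg at hqs
    have hqs0 : q s = 0 := by have := hpos q hq s; omega
    have hqall : ∀ x, x ≠ i → q x = 0 := by
      intro x hxi
      by_cases hxs : x = s
      · rw [hxs]; exact hqs0
      · exact hval x hxi hxs
    have heq : ∀ C', C' ∈ S → C' i = 1 → q = C' := by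
      intro C' hC'S hC'i
      refine eq_of_le_hyp aa ha q C' (fun x => ?_) (by rw [hab q hq, hab C' hC'S])
      by_cases hxi : x = i
      · rw [hxi, hqi, hC'i]
      · rw [hqall x hxi]; exact hpos C' hC'S x
    have h1 := heq C0 hC0S hC0i
    have h2 := heq C1 hC1S hC1i
    exact hC1ne (h2 ▸ h1 ▸ rfl)
  -- injectivity of the nonzero coordinate
  have hsinj : ∀ q q' : Fin 4 → ℤ, q ∈ S → q' ∈ S → q i = 1 → q' i = 1 →
      ∀ s, s ≠ i → (∀ x, x ≠ i → x ≠ s → q x = 0) → (∀ x, x ≠ i → x ≠ s → q' x = 0) →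
      q = q' := by
    intro q q' hq hq' hqi hq'i s hsi hval hval'
    refine eq_of_agree_except aa ha q q' s (fun x hx => ?_) (by rw [hab q hq, hab q' hq'])
    by_cases hxi : x = i
    · rw [hxi, hqi, hq'i]
    · rw [hval x hxi hx, hval' x hxi hx]
  obtain ⟨s0, hs0i, hs0pos, hs0val⟩ := hsfun C0 hC0S hC0i
  obtain ⟨s1, hs1i, hs1pos, hs1val⟩ := hsfun C1 hC1S hC1i
  obtain ⟨s2, hs2i, hs2pos, hs2val⟩ := hsfun C2 hC2S hC2i
  have hs10 : s1 ≠ s0 := by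
    intro e
    exact hC1ne (hsinj C1 C0 hC1S hC0S hC1i hC0i s0 hs0i (e ▸ hs1val) hs0val)
  have hs20 : s2 ≠ s0 := by
    intro e
    exact hC2ne0 (hsinj C2 C0 hC2S hC0S hC2i hC0i s0 hs0i (e ▸ hs2val) hs0val)
  have hs21 : s2 ≠ s1 := by
    intro e
    exact hC2ne1 (hsinj C2 C1 hC2S hC1S hC2i hC1i s1 hs1i (e ▸ hs2val) hs1val)
  -- processing a pair of top points
  have pairproc : ∀ (Ca Cb : Fin 4 → ℤ) (sa sb sc : Fin 4), Ca ∈ S → Cb ∈ S →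
      Ca i = 1 → Cb i = 1 → Ca ≠ Cb → sa ≠ i → sb ≠ i → sc ≠ i →
      sb ≠ sa → sc ≠ sa → sc ≠ sb → 1 ≤ Ca sa → 1 ≤ Cb sb →
      (∀ x, x ≠ i → x ≠ sa → Ca x = 0) → (∀ x, x ≠ i → x ≠ sb → Cb x = 0) →
      ∃ l : Fin 3, A l sc = 0 ∧ ∀ k, k ≠ l → A k sc = 1 := by
    intro Ca Cb sa sb sc haS hbS hai hbi hne hsai hsbi hsci hsba hsca hscb hapos hbpos haval hbval
    obtain ⟨k1, l1, k2, l2, hk1l1, hk2l2, hedne, hG1, hG2⟩ :=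
      pair_main hB hAS hAind hAi hApair haS hbS hai hbi hne
    have pin : ∀ m : Fin 4, m ≠ i → Ca m = 0 → Cb m = 0 → m = sc := by
      intro m hmi hza hzb
      have hmsa : m ≠ sa := fun e => by rw [e] at hza; omega
      have hmsb : m ≠ sb := fun e => by rw [e] at hzb; omega
      rcases cover4 i sa sb sc m hsai hsbi hsci hsba hsca hscb with h | h | h | h
      · exact absurd h hmi
      · exact absurd h hmsa
      · exact absurd h hmsb
      · exact h
    obtain ⟨m1, hm1i, hAk1, hAl1, hCam1, hCbm1⟩ := hG1
    obtain ⟨m2, hm2i, hAk2, hAl2, hCam2, hCbm2⟩ := hG2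
    have e1 : m1 = sc := pin m1 hm1i hCam1 hCbm1
    have e2 : m2 = sc := pin m2 hm2i hCam2 hCbm2
    rw [e1] at hAk1 hAl1
    rw [e2] at hAk2 hAl2
    have hll : l1 = l2 := by
      by_contra hne'
      exact hApair l1 l2 hne' sc hsci ⟨hAl1, hAl2⟩
    have hkk : k1 ≠ k2 := by
      intro e
      apply hedne
      rw [e, hll]
    refine ⟨l1, hAl1, fun k hk => ?_⟩
    rcases two_of_fin3 l1 k1 k2 k hkk hk1l1 (hll ▸ hk2l2) hk with h | h
    · rw [h]; exact hAk1
    · rw [h]; exact hAk2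
  obtain ⟨l01, hl01z, hl01o⟩ := pairproc C0 C1 s0 s1 s2 hC0S hC1S hC0i hC1i
    (fun e => hC1ne e.symm) hs0i hs1i hs2i hs10 hs20 hs21 hs0pos hs1pos hs0val hs1val
  obtain ⟨l02, hl02z, hl02o⟩ := pairproc C0 C2 s0 s2 s1 hC0S hC2S hC0i hC2i
    (fun e => hC2ne0 e.symm) hs0i hs2i hs1i hs20 hs10 (Ne.symm hs21) hs0pos hs2pos hs0val hs2val
  obtain ⟨l12, hl12z, hl12o⟩ := pairproc C1 C2 s1 s2 s0 hC1S hC2S hC1i hC2i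
    (fun e => hC2ne1 e.symm) hs1i hs2i hs0i hs21 (Ne.symm hs10) (Ne.symm hs20)
    hs1pos hs2pos hs1val hs2val
  have hl0102 : l01 ≠ l02 := by
    intro e
    exact hAsingle l01 ⟨s2, s1, hs21, hs2i, hs1i, hl01z, e ▸ hl02z⟩
  have hl0112 : l01 ≠ l12 := by
    intro e
    exact hAsingle l01 ⟨s2, s0, hs20, hs2i, hs0i, hl01z, e ▸ hl12z⟩
  have hl0212 : l02 ≠ l12 := by
    intro e
    exact hAsingle l02 ⟨s1, s0, hs10, hs1i, hs0i, hl02z, e ▸ hl12z⟩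
  -- covector equalities
  have hsum4 : ∀ p : Fin 4 → ℤ, p ∈ S →
      aa i * p i + aa s0 * p s0 + aa s1 * p s1 + aa s2 * p s2 = bb := by
    intro p hp
    have := hab p hp
    rwa [sum4 (fun x => aa x * p x) i s0 s1 s2 hs0i hs1i hs2i hs10 hs20 hs21] at this
  have hc01 : aa s0 + aa s1 = bb := by
    have h5 := hsum4 (A l01) (hAS l01)
    rw [hAi l01, hl01z, hl12o l01 hl0112, hl02o l01 hl0102] at h5
    linarith
  have hc02 : aa s0 + aa s2 = bb := by
    have h5 := hsum4 (A l02) (hAS l02)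
    rw [hAi l02, hl02z, hl12o l02 hl0212, hl01o l02 (Ne.symm hl0102)] at h5
    linarith
  have hc12 : aa s1 + aa s2 = bb := by
    have h5 := hsum4 (A l12) (hAS l12)
    rw [hAi l12, hl12z, hl02o l12 (Ne.symm hl0212), hl01o l12 (Ne.symm hl0112)] at h5
    linarith
  have haa1 : aa s1 = aa s0 := by omega
  have haa2 : aa s2 = aa s0 := by omega
  have hbb : bb = 2 * aa s0 := by omega
  -- classification of top points
  have topclass : ∀ q ∈ S, q i = 1 → ∀ s, s ≠ i → 1 ≤ q s →
      (∀ x, x ≠ i → x ≠ s → q x = 0) → q = ee i s := by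
    intro q hq hqi s hsi hqs hval
    have hsum := hsum4 q hq
    have haas : aa s = aa s0 := by
      rcases cover4 i s0 s1 s2 s hs0i hs1i hs2i hs10 hs20 hs21 with h | h | h | h
      · exact absurd h hsi
      · rw [h]
      · rw [h]; exact haa1
      · rw [h]; exact haa2
    have one_of : ∀ c d T : ℤ, 0 < c → 0 < d → 1 ≤ T → d + c * T = 2 * c → T = 1 := by
      intro c d T hc hd hT he
      by_contra hcon
      have h2 : 2 ≤ T := by omega
      have h3 := mul_le_mul_of_nonneg_left h2 hc.le
      nlinarith
    have hq1 : q s = 1 := by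
      rcases cover4 i s0 s1 s2 s hs0i hs1i hs2i hs10 hs20 hs21 with h | h | h | h
      · exact absurd h hsi
      · have hz1 : q s1 = 0 := hval s1 hs1i (by rw [h]; exact hs10)
        have hz2 : q s2 = 0 := hval s2 hs2i (by rw [h]; exact hs20)
        rw [hqi, hz1, hz2] at hsum
        rw [h] at hqs ⊢
        exact one_of (aa s0) (aa i) (q s0) (ha s0) (ha i) hqs (by linarith)
      · have hz1 : q s0 = 0 := hval s0 hs0i (by rw [h]; exact Ne.symm hs10)
        have hz2 : q s2 = 0 := hval s2 hs2i (by rw [h]; exact hs21)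
        rw [hqi, hz1, hz2] at hsum
        rw [h] at hqs ⊢
        exact one_of (aa s0) (aa i) (q s1) (ha s0) (ha i) hqs (by rw [← haa1]; linarith)
      · have hz1 : q s0 = 0 := hval s0 hs0i (by rw [h]; exact Ne.symm hs20)
        have hz2 : q s1 = 0 := hval s1 hs1i (by rw [h]; exact Ne.symm hs21)
        rw [hqi, hz1, hz2] at hsum
        rw [h] at hqs ⊢
        exact one_of (aa s0) (aa i) (q s2) (ha s0) (ha i) hqs (by rw [← haa2]; linarith)
    funext x
    by_cases hxi : x = i
    · rw [hxi, hqi, ee_apply_left (Ne.symm hsi)]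
    by_cases hxs : x = s
    · rw [hxs, hq1, ee_apply_right (Ne.symm hsi)]
    · rw [hval x hxi hxs, ee_apply_other hxi hxs]
  have hC0e : C0 = ee i s0 := topclass C0 hC0S hC0i s0 hs0i hs0pos hs0val
  have hC1e : C1 = ee i s1 := topclass C1 hC1S hC1i s1 hs1i hs1pos hs1val
  have hC2e : C2 = ee i s2 := topclass C2 hC2S hC2i s2 hs2i hs2pos hs2val
  -- explicit values of the three top points
  have hC0v : C0 i = 1 ∧ C0 s0 = 1 ∧ C0 s1 = 0 ∧ C0 s2 = 0 :=
    ⟨hC0i, by rw [hC0e, ee_apply_right (Ne.symm hs0i)],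
      hs0val s1 hs1i hs10, hs0val s2 hs2i hs20⟩
  have hC1v : C1 i = 1 ∧ C1 s0 = 0 ∧ C1 s1 = 1 ∧ C1 s2 = 0 :=
    ⟨hC1i, hs1val s0 hs0i (Ne.symm hs10), by rw [hC1e, ee_apply_right (Ne.symm hs1i)],
      hs1val s2 hs2i hs21⟩
  have hC2v : C2 i = 1 ∧ C2 s0 = 0 ∧ C2 s1 = 0 ∧ C2 s2 = 1 :=
    ⟨hC2i, hs2val s0 hs0i (Ne.symm hs20), hs2val s1 hs1i (Ne.symm hs21),
      by rw [hC2e, ee_apply_right (Ne.symm hs2i)]⟩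
  -- values of the triangle points
  have hA01v : A l01 i = 0 ∧ A l01 s0 = 1 ∧ A l01 s1 = 1 ∧ A l01 s2 = 0 :=
    ⟨hAi l01, hl12o l01 hl0112, hl02o l01 hl0102, hl01z⟩
  have hA02v : A l02 i = 0 ∧ A l02 s0 = 1 ∧ A l02 s1 = 0 ∧ A l02 s2 = 1 :=
    ⟨hAi l02, hl12o l02 hl0212, hl02z, hl01o l02 (Ne.symm hl0102)⟩
  have hA12v : A l12 i = 0 ∧ A l12 s0 = 0 ∧ A l12 s1 = 1 ∧ A l12 s2 = 1 :=
    ⟨hAi l12, hl12z, hl02o l12 (Ne.symm hl0212), hl01o l12 (Ne.symm hl0112)⟩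
  -- classification of bottom points
  have botclass : ∀ p ∈ S, p i = 0 → p = A l01 ∨ p = A l02 ∨ p = A l12 := by
    intro p hp hpi
    have hsum := hsum4 p hp
    rw [hpi, haa1, haa2, hbb] at hsum
    have hn : p s0 + p s1 + p s2 = 2 := by
      have h5 : aa s0 * (p s0 + p s1 + p s2) = aa s0 * 2 := by ring_nf; ring_nf at hsum; linarith
      exact mul_left_cancel₀ (ha s0).ne' h5
    have h0 := hpos p hp s0
    have h1 := hpos p hp s1
    have h2 := hpos p hp s2
    have hcases : (p s0 = 1 ∧ p s1 = 1 ∧ p s2 = 0) ∨ (p s0 = 1 ∧ p s1 = 0 ∧ p s2 = 1) ∨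
        (p s0 = 0 ∧ p s1 = 1 ∧ p s2 = 1) ∨ (p s0 = 2 ∧ p s1 = 0 ∧ p s2 = 0) ∨
        (p s0 = 0 ∧ p s1 = 2 ∧ p s2 = 0) ∨ (p s0 = 0 ∧ p s1 = 0 ∧ p s2 = 2) := by omega
    have eqA : ∀ l : Fin 3, A l i = 0 → A l s0 = p s0 → A l s1 = p s1 → A l s2 = p s2 →
        p = A l := by
      intro l e0 e1 e2 e3
      funext x
      rcases cover4 i s0 s1 s2 x hs0i hs1i hs2i hs10 hs20 hs21 with h | h | h | h <;>
        subst h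
      · rw [hpi, e0]
      · rw [e1]
      · rw [e2]
      · rw [e3]
    rcases hcases with ⟨e0, e1, e2⟩ | ⟨e0, e1, e2⟩ | ⟨e0, e1, e2⟩ | ⟨e0, e1, e2⟩ |
      ⟨e0, e1, e2⟩ | ⟨e0, e1, e2⟩
    · exact Or.inl (eqA l01 hA01v.1 (by rw [hA01v.2.1, e0]) (by rw [hA01v.2.2.1, e1])
        (by rw [hA01v.2.2.2, e2]))
    · exact Or.inr (Or.inl (eqA l02 hA02v.1 (by rw [hA02v.2.1, e0]) (by rw [hA02v.2.2.1, e1])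
        (by rw [hA02v.2.2.2, e2])))
    · exact Or.inr (Or.inr (eqA l12 hA12v.1 (by rw [hA12v.2.1, e0]) (by rw [hA12v.2.2.1, e1])
        (by rw [hA12v.2.2.2, e2])))
    · exact absurd (no2case hB i s0 s1 s2 hs0i hs1i hs2i hs10 hs20 hs21
        p (A l12) C1 C2 hp (hAS l12) hC1S hC2S hpi e0 e1 e2
        hA12v.1 hA12v.2.1 hA12v.2.2.1 hA12v.2.2.2
        hC1v.1 hC1v.2.1 hC1v.2.2.1 hC1v.2.2.2
        hC2v.1 hC2v.2.1 hC2v.2.2.1 hC2v.2.2.2) (not_false)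
    · exact absurd (no2case hB i s1 s0 s2 hs1i hs0i hs2i (Ne.symm hs10) hs21 hs20
        p (A l02) C0 C2 hp (hAS l02) hC0S hC2S hpi e1 e0 e2
        hA02v.1 hA02v.2.2.1 hA02v.2.1 hA02v.2.2.2
        hC0v.1 hC0v.2.2.1 hC0v.2.1 hC0v.2.2.2
        hC2v.1 hC2v.2.2.1 hC2v.2.1 hC2v.2.2.2) (not_false)
    · exact absurd (no2case hB i s2 s0 s1 hs2i hs0i hs1i (Ne.symm hs20) (Ne.symm hs21) hs10
        p (A l01) C0 C1 hp (hAS l01) hC0S hC1S hpi e2 e0 e1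
        hA01v.1 hA01v.2.2.2 hA01v.2.1 hA01v.2.2.1
        hC0v.1 hC0v.2.2.2 hC0v.2.1 hC0v.2.2.1
        hC1v.1 hC1v.2.2.2 hC1v.2.1 hC1v.2.2.1) (not_false)
  -- triangle points as ee's
  have eeA : ∀ (l : Fin 3) (u v : Fin 4), u ≠ i → v ≠ i → v ≠ u →
      A l i = 0 → A l u = 1 → A l v = 1 →
      (∀ x, x ≠ i → x ≠ u → x ≠ v → A l x = 0) → A l = ee u v := by
    intro l u v hui hvi hvu e0 e1 e2 e3
    funext x
    by_cases hxu : x = u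
    · rw [hxu, e1, ee_apply_left (Ne.symm hvu)]
    by_cases hxv : x = v
    · rw [hxv, e2, ee_apply_right (Ne.symm hvu)]
    by_cases hxi : x = i
    · rw [hxi, e0, ee_apply_other (Ne.symm hui) (Ne.symm hvi)]
    · rw [e3 x hxi hxu hxv, ee_apply_other hxu hxv]
  have hA01e : A l01 = ee s0 s1 := by
    refine eeA l01 s0 s1 hs0i hs1i hs10 hA01v.1 hA01v.2.1 hA01v.2.2.1 (fun x hxi hx0 hx1 => ?_)
    rcases cover4 i s0 s1 s2 x hs0i hs1i hs2i hs10 hs20 hs21 with h | h | h | h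
    · exact absurd h hxi
    · exact absurd h hx0
    · exact absurd h hx1
    · rw [h]; exact hA01v.2.2.2
  have hA02e : A l02 = ee s0 s2 := by
    refine eeA l02 s0 s2 hs0i hs2i hs20 hA02v.1 hA02v.2.1 hA02v.2.2.2 (fun x hxi hx0 hx2 => ?_)
    rcases cover4 i s0 s1 s2 x hs0i hs1i hs2i hs10 hs20 hs21 with h | h | h | h
    · exact absurd h hxi
    · exact absurd h hx0
    · rw [h]; exact hA02v.2.2.1
    · exact absurd h hx2
  have hA12e : A l12 = ee s1 s2 := by
    refine eeA l12 s1 s2 hs1i hs2i hs21 hA12v.1 hA12v.2.2.1 hA12v.2.2.2 (fun x hxi hx1 hx2 => ?_)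
    rcases cover4 i s0 s1 s2 x hs0i hs1i hs2i hs10 hs20 hs21 with h | h | h | h
    · exact absurd h hxi
    · rw [h]; exact hA12v.2.1
    · exact absurd h hx1
    · exact absurd h hx2
  have ee_comm : ∀ u v : Fin 4, ee u v = ee v u := by
    intro u v; funext x; simp [ee]; ring
  apply Finset.Subset.antisymm
  · -- S ⊆ crossPolytope
    intro q hq
    rcases hdich01 q hq with hqi | hqi
    · rcases botclass q hq hqi with rfl | rfl | rfl
      · rw [hA01e]; exact ee_mem_cross s0 s1 (Ne.symm hs10)
      · rw [hA02e]; exact ee_mem_cross s0 s2 (Ne.symm hs20)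
      · rw [hA12e]; exact ee_mem_cross s1 s2 (Ne.symm hs21)
    · obtain ⟨s, hsi, hspos, hsval⟩ := hsfun q hq hqi
      rw [topclass q hq hqi s hsi hspos hsval]
      exact ee_mem_cross i s (Ne.symm hsi)
  · -- crossPolytope ⊆ S
    intro q hq
    obtain ⟨u, v, huv, rfl⟩ := cross_eq_ee q hq
    rcases cover4 i s0 s1 s2 u hs0i hs1i hs2i hs10 hs20 hs21 with h | h | h | h <;>
      rcases cover4 i s0 s1 s2 v hs0i hs1i hs2i hs10 hs20 hs21 with h' | h' | h' | h' <;>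
      rw [h, h'] at huv ⊢ <;>
      first
        | exact absurd rfl huv
        | (rw [← hC0e]; exact hC0S)
        | (rw [← hC1e]; exact hC1S)
        | (rw [← hC2e]; exact hC2S)
        | (rw [← hA01e]; exact hAS l01)
        | (rw [← hA02e]; exact hAS l02)
        | (rw [← hA12e]; exact hAS l12)
        | (rw [ee_comm, ← hC0e]; exact hC0S)
        | (rw [ee_comm, ← hC1e]; exact hC1S)
        | (rw [ee_comm, ← hC2e]; exact hC2S)
        | (rw [ee_comm, ← hA01e]; exact hAS l01)
        | (rw [ee_comm, ← hA02e]; exact hAS l02)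
        | (rw [ee_comm, ← hA12e]; exact hAS l12)
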